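/- Let M ≥ 1 and let θ ∈ ℂ be a primitive M-th root of unity. Let u : ℤ × ℤ → ℂ satisfy (u_{n+1,m+1}+1)(u_{n,m+1}-1) = θ (u_{n+1,m}+1)(u_{n,m}-1) for all n,m ∈ ℤ, and assume u_{n,m+3M} ≠ u_{n,m+2M} and u_{n,m+M} ≠ u_{n,m} for all n,m ∈ ℤ. Then the function W_{n,m} = ((u_{n,m+3M}-u_{n,m+M})(u_{n,m+2M}-u_{n,m})) / ((u_{n,m+3M}-u_{n,m+2M})(u_{n,m+M}-u_{n,m})) satisfies W_{n+1,m} = W_{n,m} for all n,m ∈ ℤ, i.e. it is a first integral of order 3M in the m-direction. -/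
import Mathlib


/-- For the lattice equation with `θ` a primitive `M`-th root of unity,
`W_{n,m} = ((u_{n,m+3M}-u_{n,m+M})(u_{n,m+2M}-u_{n,m}))/((u_{n,m+3M}-u_{n,m+2M})(u_{n,m+M}-u_{n,m}))`
is a first integral of order `3M` in the m-direction: `W_{n+1,m} = W_{n,m}`. -/
theorem stmt_3 (M : ℕ) (hM : 1 ≤ M) (θ : ℂ) (hθM : θ ^ M = 1)
    (hθprim : ∀ j : ℕ, 1 ≤ j → j ≤ M - 1 → θ ^ j ≠ 1)
    (u : ℤ → ℤ → ℂ)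
    (heq : ∀ n m : ℤ,
      (u (n + 1) (m + 1) + 1) * (u n (m + 1) - 1)
        = θ * ((u (n + 1) m + 1) * (u n m - 1)))
    (hne1 : ∀ n m : ℤ, u n (m + 3 * M) ≠ u n (m + 2 * M))
    (hne2 : ∀ n m : ℤ, u n (m + M) ≠ u n m) :
    ∀ n m : ℤ,
      ((u (n + 1) (m + 3 * M) - u (n + 1) (m + M)) * (u (n + 1) (m + 2 * M) - u (n + 1) m))
          / ((u (n + 1) (m + 3 * M) - u (n + 1) (m + 2 * M)) * (u (n + 1) (m + M) - u (n + 1) m))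
        = ((u n (m + 3 * M) - u n (m + M)) * (u n (m + 2 * M) - u n m))
          / ((u n (m + 3 * M) - u n (m + 2 * M)) * (u n (m + M) - u n m)) := by
  have hstep : ∀ (n m : ℤ) (j : ℕ),
      (u (n + 1) (m + (j : ℤ)) + 1) * (u n (m + (j : ℤ)) - 1)
        = θ ^ j * ((u (n + 1) m + 1) * (u n m - 1)) := by
    intro n m j
    induction j with
    | zero => simp
    | succ j ih =>
      have hidx : (m + ((j + 1 : ℕ) : ℤ)) = (m + (j : ℤ)) + 1 := by push_cast; ring
      rw [hidx, heq n (m + (j : ℤ)), ih]; ring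
  have hper : ∀ n m : ℤ,
      (u (n + 1) (m + (M : ℤ)) + 1) * (u n (m + (M : ℤ)) - 1)
        = (u (n + 1) m + 1) * (u n m - 1) := by
    intro n m
    have h := hstep n m M
    rwa [hθM, one_mul] at h
  intro n m
  have e1 := hper n m
  have e2 := hper n (m + (M : ℤ))
  rw [show m + (M : ℤ) + (M : ℤ) = m + 2 * (M : ℤ) from by ring, e1] at e2
  have e3 := hper n (m + 2 * (M : ℤ))
  rw [show m + 2 * (M : ℤ) + (M : ℤ) = m + 3 * (M : ℤ) from by ring, e2] at e3
  have d1 : u (n + 1) (m + 3 * (M : ℤ)) - u (n + 1) (m + 2 * (M : ℤ)) ≠ 0 :=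
    sub_ne_zero_of_ne (hne1 (n + 1) m)
  have d2 : u (n + 1) (m + (M : ℤ)) - u (n + 1) m ≠ 0 :=
    sub_ne_zero_of_ne (hne2 (n + 1) m)
  have d3 : u n (m + 3 * (M : ℤ)) - u n (m + 2 * (M : ℤ)) ≠ 0 :=
    sub_ne_zero_of_ne (hne1 n m)
  have d4 : u n (m + (M : ℤ)) - u n m ≠ 0 :=
    sub_ne_zero_of_ne (hne2 n m)
  rw [div_eq_div_iff (mul_ne_zero d1 d2) (mul_ne_zero d3 d4)]
  by_cases hc : (u (n + 1) m + 1) * (u n m - 1) = 0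
  · have h1 := e1.trans hc
    have h2 := e2.trans hc
    have h3 := e3.trans hc
    rcases mul_eq_zero.mp hc with hB0 | hA0 <;>
    rcases mul_eq_zero.mp h1 with hB1 | hA1 <;>
    rcases mul_eq_zero.mp h2 with hB2 | hA2 <;>
    rcases mul_eq_zero.mp h3 with hB3 | hA3 <;>
    ·first
      | exact absurd (show u (n + 1) (m + (M : ℤ)) = u (n + 1) m by
          linear_combination hB1 - hB0) (hne2 (n + 1) m)
      | exact absurd (show u n (m + (M : ℤ)) = u n m by
          linear_combination hA1 - hA0) (hne2 n m)
      | exact absurd (show u (n + 1) (m + 3 * (M : ℤ)) = u (n + 1) (m + 2 * (M : ℤ)) by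
          linear_combination hB3 - hB2) (hne1 (n + 1) m)
      | exact absurd (show u n (m + 3 * (M : ℤ)) = u n (m + 2 * (M : ℤ)) by
          linear_combination hA3 - hA2) (hne1 n m)
      | (try rw [show u (n + 1) m = -1 from by linear_combination hB0]
         try rw [show u n m = 1 from by linear_combination hA0]
         try rw [show u (n + 1) (m + (M : ℤ)) = -1 from by linear_combination hB1]
         try rw [show u n (m + (M : ℤ)) = 1 from by linear_combination hA1]
         try rw [show u (n + 1) (m + 2 * (M : ℤ)) = -1 from by linear_combination hB2]
         try rw [show u n (m + 2 * (M : ℤ)) = 1 from by linear_combination hA2]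
         try rw [show u (n + 1) (m + 3 * (M : ℤ)) = -1 from by linear_combination hB3]
         try rw [show u n (m + 3 * (M : ℤ)) = 1 from by linear_combination hA3]
         ring)
  · have hA0 : u n m - 1 ≠ 0 := right_ne_zero_of_mul hc
    have hc1 : (u (n + 1) (m + (M : ℤ)) + 1) * (u n (m + (M : ℤ)) - 1) ≠ 0 := by
      rw [e1]; exact hc
    have hc2 : (u (n + 1) (m + 2 * (M : ℤ)) + 1) * (u n (m + 2 * (M : ℤ)) - 1) ≠ 0 := by
      rw [e2]; exact hc
    have hc3 : (u (n + 1) (m + 3 * (M : ℤ)) + 1) * (u n (m + 3 * (M : ℤ)) - 1) ≠ 0 := by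
      rw [e3]; exact hc
    have hA1 : u n (m + (M : ℤ)) - 1 ≠ 0 := right_ne_zero_of_mul hc1
    have hA2 : u n (m + 2 * (M : ℤ)) - 1 ≠ 0 := right_ne_zero_of_mul hc2
    have hA3 : u n (m + 3 * (M : ℤ)) - 1 ≠ 0 := right_ne_zero_of_mul hc3
    set c := (u (n + 1) m + 1) * (u n m - 1) with hcdef
    have hB0 : u (n + 1) m = c / (u n m - 1) - 1 := by
      rw [eq_sub_iff_add_eq, eq_div_iff hA0]
    have hB1 : u (n + 1) (m + (M : ℤ)) = c / (u n (m + (M : ℤ)) - 1) - 1 := by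
      rw [eq_sub_iff_add_eq, eq_div_iff hA1]; exact e1
    have hB2 : u (n + 1) (m + 2 * (M : ℤ)) = c / (u n (m + 2 * (M : ℤ)) - 1) - 1 := by
      rw [eq_sub_iff_add_eq, eq_div_iff hA2]; exact e2
    have hB3 : u (n + 1) (m + 3 * (M : ℤ)) = c / (u n (m + 3 * (M : ℤ)) - 1) - 1 := by
      rw [eq_sub_iff_add_eq, eq_div_iff hA3]; exact e3
    rw [hB1, hB2, hB3, hB0]
    field_simp
    ring
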